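/- arXiv:1010.1420 — 3 statements merged into one kernel-verified Lean document; each statement's English description precedes it below -/
import Mathlib

section
/- For all nonnegative integers n, the sequence q_n = \sum_{k=0}^n \binom{n}{k}^2 k! satisfies the second-order homogeneous linear recurrence q_{n+2} - 2(n+2) q_{n+1} + (n+1)^2 q_n = 0. -/
open Finset

noncomputable def q (n : ℕ) : ℚ :=
  ∑ k ∈ Finset.range (n + 1), ((n.choose k : ℚ))^2 * (Nat.factorial k : ℚ)

/-- Cast of `Nat.choose_mul_succ_eq` with true subtraction. -/
lemma chooseQ_row (n k : ℕ) :
    ((n : ℚ) + 1 - k) * (((n + 1).choose k : ℚ)) = ((n : ℚ) + 1) * ((n.choose k : ℚ)) := by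
  rcases le_or_gt k (n + 1) with h | h
  · have h0 := Nat.choose_mul_succ_eq n k
    have h1 : ((n + 1 - k : ℕ) : ℚ) = (n : ℚ) + 1 - k := by
      push_cast [Nat.cast_sub h]; ring
    have h2 := congrArg (fun m : ℕ => (m : ℚ)) h0
    push_cast at h2
    rw [h1] at h2
    linarith [h2]
  · rw [Nat.choose_eq_zero_of_lt h, Nat.choose_eq_zero_of_lt (by omega : n < k)]
    simp

/-- Cast of `Nat.choose_succ_right_eq` with true subtraction. -/
lemma chooseQ_col (n k : ℕ) :
    ((k : ℚ) + 1) * ((n.choose (k + 1) : ℚ)) = ((n : ℚ) - k) * ((n.choose k : ℚ)) := by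
  rcases le_or_gt k n with h | h
  · have h0 := Nat.choose_succ_right_eq n k
    have h1 : ((n - k : ℕ) : ℚ) = (n : ℚ) - k := by
      push_cast [Nat.cast_sub h]; ring
    have h2 := congrArg (fun m : ℕ => (m : ℚ)) h0
    push_cast at h2
    rw [h1] at h2
    linarith [h2]
  · rw [Nat.choose_eq_zero_of_lt h, Nat.choose_eq_zero_of_lt (by omega : n < k + 1)]
    simp

theorem q_recurrence (n : ℕ) :
    q (n + 2) - 2 * ((n : ℚ) + 2) * q (n + 1) + ((n : ℚ) + 1)^2 * q n = 0 := by
  -- the telescoping certificate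
  set g : ℕ → ℚ := fun k =>
    (k : ℚ) * ((k : ℚ)^2 - (2 * (n : ℚ) + 3) * k + (n : ℚ) * ((n : ℚ) + 2)) *
      (((n + 2).choose k : ℚ))^2 * (Nat.factorial k : ℚ) with hg
  have key : ∀ k : ℕ,
      ((n : ℚ) + 1)^2 * ((n : ℚ) + 2)^2 *
        ((((n + 2).choose k : ℚ))^2 * (Nat.factorial k : ℚ)
          - 2 * ((n : ℚ) + 2) * (((n + 1).choose k : ℚ))^2 * (Nat.factorial k : ℚ)
          + ((n : ℚ) + 1)^2 * ((n.choose k : ℚ))^2 * (Nat.factorial k : ℚ))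
      = ((n : ℚ) + 1)^2 * (g (k + 1) - g k) := by
    intro k
    have e1 := chooseQ_row n k
    have e2 := chooseQ_row (n + 1) k
    have e3 := chooseQ_col (n + 2) k
    push_cast at e1 e2 e3 ⊢
    simp only [hg]
    push_cast [Nat.factorial_succ]
    set A := ((n.choose k : ℚ)) with hA
    set B := (((n + 1).choose k : ℚ)) with hB
    set Cc := (((n + 2).choose k : ℚ)) with hCc
    set Cp := (((n + 2).choose (k + 1) : ℚ)) with hCp
    set f := ((Nat.factorial k : ℚ)) with hf
    set N := (n : ℚ) with hN
    set K := (k : ℚ) with hK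
    linear_combination
      (-(N + 1)^2 * (N + 2)^2 * f * ((N + 1 - K) * B + (N + 1) * A)) * e1 +
      ((N + 1)^2 * f * (2 * (N + 2) - (N + 1 - K)^2) * ((N + 2 - K) * Cc + (N + 2) * B)) * e2 +
      (-(N + 1)^2 * ((K + 1)^2 - (2 * N + 3) * (K + 1) + N * (N + 2)) * f *
        ((K + 1) * Cp + (N + 2 - K) * Cc)) * e3
  -- sum the certificate over range (n + 3)
  have hg0 : g 0 = 0 := by simp [hg]
  have hgtop : g (n + 3) = 0 := by
    have h0 : (n + 2).choose (n + 3) = 0 := Nat.choose_eq_zero_of_lt (by omega)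
    simp [hg, h0]
  have hq2 : q (n + 2) = ∑ k ∈ Finset.range (n + 3),
      (((n + 2).choose k : ℚ))^2 * (Nat.factorial k : ℚ) := rfl
  have hq1 : q (n + 1) = ∑ k ∈ Finset.range (n + 3),
      (((n + 1).choose k : ℚ))^2 * (Nat.factorial k : ℚ) := by
    rw [q, Finset.sum_range_succ (n := n + 2)]
    rw [Nat.choose_eq_zero_of_lt (by omega : n + 1 < n + 2)]
    simp
  have hq0 : q n = ∑ k ∈ Finset.range (n + 3),
      ((n.choose k : ℚ))^2 * (Nat.factorial k : ℚ) := by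
    rw [q, Finset.sum_range_succ (n := n + 2), Finset.sum_range_succ (n := n + 1)]
    rw [Nat.choose_eq_zero_of_lt (by omega : n < n + 2),
      Nat.choose_eq_zero_of_lt (by omega : n < n + 1)]
    simp
  have hE : q (n + 2) - 2 * ((n : ℚ) + 2) * q (n + 1) + ((n : ℚ) + 1)^2 * q n
      = ∑ k ∈ Finset.range (n + 3),
        ((((n + 2).choose k : ℚ))^2 * (Nat.factorial k : ℚ)
          - 2 * ((n : ℚ) + 2) * (((n + 1).choose k : ℚ))^2 * (Nat.factorial k : ℚ)
          + ((n : ℚ) + 1)^2 * ((n.choose k : ℚ))^2 * (Nat.factorial k : ℚ)) := by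
    rw [hq2, hq1, hq0, Finset.sum_add_distrib, Finset.sum_sub_distrib]
    rw [show (∑ k ∈ Finset.range (n + 3),
        2 * ((n : ℚ) + 2) * (((n + 1).choose k : ℚ))^2 * (Nat.factorial k : ℚ))
        = 2 * ((n : ℚ) + 2) * ∑ k ∈ Finset.range (n + 3),
            (((n + 1).choose k : ℚ))^2 * (Nat.factorial k : ℚ) by
      rw [Finset.mul_sum]; exact Finset.sum_congr rfl (fun k _ => by ring)]
    rw [show (∑ k ∈ Finset.range (n + 3),
        ((n : ℚ) + 1)^2 * ((n.choose k : ℚ))^2 * (Nat.factorial k : ℚ))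
        = ((n : ℚ) + 1)^2 * ∑ k ∈ Finset.range (n + 3),
            ((n.choose k : ℚ))^2 * (Nat.factorial k : ℚ) by
      rw [Finset.mul_sum]; exact Finset.sum_congr rfl (fun k _ => by ring)]
  have hz : ((n : ℚ) + 1)^2 * ((n : ℚ) + 2)^2 * (∑ k ∈ Finset.range (n + 3),
        ((((n + 2).choose k : ℚ))^2 * (Nat.factorial k : ℚ)
          - 2 * ((n : ℚ) + 2) * (((n + 1).choose k : ℚ))^2 * (Nat.factorial k : ℚ)
          + ((n : ℚ) + 1)^2 * ((n.choose k : ℚ))^2 * (Nat.factorial k : ℚ))) = 0 := by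
    rw [Finset.mul_sum]
    calc (∑ k ∈ Finset.range (n + 3), ((n : ℚ) + 1)^2 * ((n : ℚ) + 2)^2 *
          ((((n + 2).choose k : ℚ))^2 * (Nat.factorial k : ℚ)
            - 2 * ((n : ℚ) + 2) * (((n + 1).choose k : ℚ))^2 * (Nat.factorial k : ℚ)
            + ((n : ℚ) + 1)^2 * ((n.choose k : ℚ))^2 * (Nat.factorial k : ℚ)))
        = ∑ k ∈ Finset.range (n + 3), ((n : ℚ) + 1)^2 * (g (k + 1) - g k) :=
          Finset.sum_congr rfl (fun k _ => key k)
      _ = ((n : ℚ) + 1)^2 * (g (n + 3) - g 0) := by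
          rw [← Finset.mul_sum, Finset.sum_range_sub g]
      _ = 0 := by rw [hg0, hgtop]; ring
  have hne : ((n : ℚ) + 1)^2 * ((n : ℚ) + 2)^2 ≠ 0 := by positivity
  rw [hE]
  exact (mul_eq_zero.mp hz).resolve_left hne
end

section
/- For every nonnegative integer n, D_n \cdot p_n is an integer, where p_n = \sum_{k=0}^n \binom{n}{k}^2 k! (2 H_{n-k} - H_k) and D_n is the least common multiple of 1, 2, ..., n (with D_0 = 1). -/
open Finset

noncomputable def H (m : ℕ) : ℚ := ∑ j ∈ Finset.range m, (1 : ℚ) / (j + 1)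

noncomputable def p (n : ℕ) : ℚ :=
  ∑ k ∈ Finset.range (n + 1),
    ((n.choose k : ℚ))^2 * (Nat.factorial k : ℚ) * (2 * H (n - k) - H k)

/-- `D n` is the least common multiple of `1, 2, ..., n` (with `D 0 = 1`). -/
def D (n : ℕ) : ℕ := (Finset.Icc 1 n).lcm id

lemma DH_mem (n m : ℕ) (hm : m ≤ n) :
    (D n : ℚ) * H m ∈ (Int.castRingHom ℚ).range := by
  rw [H, Finset.mul_sum]
  apply sum_mem
  intro j hj
  have hjm : j < m := Finset.mem_range.mp hj
  have hdvd : (j + 1) ∣ D n := by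
    have : (j + 1) ∈ Finset.Icc 1 n := by
      simp only [Finset.mem_Icc]
      omega
    exact Finset.dvd_lcm (f := id) this
  obtain ⟨c, hc⟩ := hdvd
  refine ⟨(c : ℤ), ?_⟩
  have : (D n : ℚ) = ((j : ℚ) + 1) * c := by
    rw [hc]; push_cast; ring
  rw [this]
  have hj1 : ((j : ℚ) + 1) ≠ 0 := by positivity
  field_simp
  simp

theorem D_mul_p_integer (n : ℕ) : ∃ z : ℤ, (D n : ℚ) * p n = (z : ℚ) := by
  have hmem : (D n : ℚ) * p n ∈ (Int.castRingHom ℚ).range := by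
    rw [p, Finset.mul_sum]
    apply sum_mem
    intro k hk
    have hkn : k ≤ n := by
      have := Finset.mem_range.mp hk; omega
    have heq : (D n : ℚ) * (((n.choose k : ℚ))^2 * (Nat.factorial k : ℚ) *
        (2 * H (n - k) - H k)) =
        ((n.choose k : ℚ))^2 * (Nat.factorial k : ℚ) *
        (2 * ((D n : ℚ) * H (n - k)) - (D n : ℚ) * H k) := by ring
    rw [heq]
    refine mul_mem (mul_mem (pow_mem (show ((n.choose k : ℚ)) ∈ (Int.castRingHom ℚ).range from ⟨(n.choose k : ℤ), by simp⟩) 2)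
      ⟨(Nat.factorial k : ℤ), by simp⟩) ?_
    exact sub_mem (mul_mem ⟨2, by simp⟩ (DH_mem n (n - k) (by omega)))
      (DH_mem n k hkn)
  obtain ⟨z, hz⟩ := hmem
  exact ⟨z, hz.symm⟩
end

section
/- For every integer n \ge 1, n \cdot \mathfrak{d}_n is an integer, and if n is even, then n \cdot \mathfrak{d}_n / 2 is an integer, where \mathfrak{d}_n = p_{n-1} q_n - p_n q_{n-1} with q_n = \sum_{k=0}^n \binom{n}{k}^2 k! and p_n = \sum_{k=0}^n \binom{n}{k}^2 k! (2 H_{n-k} - H_k). -/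
open Finset
open Nat

noncomputable def tt (n k : ℕ) : ℚ := ((n.choose k : ℚ))^2 * (Nat.factorial k : ℚ)
noncomputable def hs (n k : ℕ) : ℚ := tt n k * (2 * H (n - k) - H k)
noncomputable def Rq (n k : ℕ) : ℚ :=
  ((k : ℚ) * ((k:ℚ)^2 - (2*(n:ℚ)-1)*k + n*((n:ℚ)-2))) / (n:ℚ)^2
noncomputable def Sq (n k : ℕ) : ℚ :=
  (3*(k:ℚ)^2 - 2*(2*(n:ℚ)-1)*(k:ℚ) + (n:ℚ)*((n:ℚ)-2)) / (n:ℚ)^2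

lemma H_succ (m : ℕ) : H (m+1) = H m + 1/((m:ℚ)+1) := by
  simp [H, Finset.sum_range_succ]

lemma lemA (k j : ℕ) :
    tt (k+j+2) k - 2*((k:ℚ)+j+2)*tt (k+j+1) k + ((k:ℚ)+j+1)^2 * tt (k+j) k
      = Rq (k+j+2) (k+1) * tt (k+j+2) (k+1) - Rq (k+j+2) k * tt (k+j+2) k := by
  have s1 : k+j+2-k = j+2 := by omega
  have e1 : ((k+j+2).choose k : ℚ) = (k+j+2) ! / (k ! * (j+2) !) := by
    rw [Nat.cast_choose ℚ (by omega), s1]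
  have s2 : k+j+1-k = j+1 := by omega
  have e2 : ((k+j+1).choose k : ℚ) = (k+j+1) ! / (k ! * (j+1) !) := by
    rw [Nat.cast_choose ℚ (by omega), s2]
  have s3 : k+j-k = j := by omega
  have e3 : ((k+j).choose k : ℚ) = (k+j) ! / (k ! * j !) := by
    rw [Nat.cast_choose ℚ (by omega), s3]
  have s4 : k+j+2-(k+1) = j+1 := by omega
  have e4 : ((k+j+2).choose (k+1) : ℚ) = (k+j+2) ! / ((k+1) ! * (j+1) !) := by
    rw [Nat.cast_choose ℚ (by omega), s4]
  have f1 : ((k+j+2) ! : ℚ) = ((k:ℚ)+j+2)*((k:ℚ)+j+1)*((k+j) ! : ℚ) := by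
    show (((k+j+1)+1) ! : ℚ) = _
    rw [Nat.factorial_succ, Nat.factorial_succ]; push_cast; ring
  have f2 : ((k+j+1) ! : ℚ) = ((k:ℚ)+j+1)*((k+j) ! : ℚ) := by
    rw [Nat.factorial_succ]; push_cast; ring
  have f3 : ((j+2) ! : ℚ) = ((j:ℚ)+2)*((j:ℚ)+1)*(j ! : ℚ) := by
    rw [Nat.factorial_succ, Nat.factorial_succ]; push_cast; ring
  have f4 : ((j+1) ! : ℚ) = ((j:ℚ)+1)*(j ! : ℚ) := by
    rw [Nat.factorial_succ]; push_cast; ring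
  have f5 : ((k+1) ! : ℚ) = ((k:ℚ)+1)*(k ! : ℚ) := by
    rw [Nat.factorial_succ]; push_cast; ring
  have hk : (k ! : ℚ) ≠ 0 := Nat.cast_ne_zero.2 (Nat.factorial_ne_zero k)
  have hj : (j ! : ℚ) ≠ 0 := Nat.cast_ne_zero.2 (Nat.factorial_ne_zero j)
  have hkj : ((k+j) ! : ℚ) ≠ 0 := Nat.cast_ne_zero.2 (Nat.factorial_ne_zero _)
  have h1 : ((k:ℚ)+j+2) ≠ 0 := by positivity
  have h2 : ((k:ℚ)+j+1) ≠ 0 := by positivity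
  have h3 : ((j:ℚ)+2) ≠ 0 := by positivity
  have h4 : ((j:ℚ)+1) ≠ 0 := by positivity
  have h5 : ((k:ℚ)+1) ≠ 0 := by positivity
  unfold tt Rq
  rw [e1, e2, e3, e4, f1, f2, f3, f4, f5]
  push_cast
  field_simp
  ring

lemma tt_zero {n k : ℕ} (h : n < k) : tt n k = 0 := by
  simp [tt, Nat.choose_eq_zero_of_lt h]

lemma hs_zero {n k : ℕ} (h : n < k) : hs n k = 0 := by
  simp [hs, tt_zero h]

lemma lemB (k : ℕ) :
    tt (k+2) (k+1) - 2*((k:ℚ)+2)*tt (k+1) (k+1) + ((k:ℚ)+1)^2 * tt k (k+1)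
      = Rq (k+2) (k+2) * tt (k+2) (k+2) - Rq (k+2) (k+1) * tt (k+2) (k+1) := by
  have c1 : (k+2).choose (k+1) = k+2 := Nat.choose_succ_self_right (k+1)
  have c2 : (k+1).choose (k+1) = 1 := Nat.choose_self _
  have c3 : (k+2).choose (k+2) = 1 := Nat.choose_self _
  have hz : tt k (k+1) = 0 := tt_zero (by omega)
  have f1 : ((k+2) ! : ℚ) = ((k:ℚ)+2)*((k:ℚ)+1)*(k ! : ℚ) := by
    rw [Nat.factorial_succ, Nat.factorial_succ]; push_cast; ring
  have f2 : ((k+1) ! : ℚ) = ((k:ℚ)+1)*(k ! : ℚ) := by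
    rw [Nat.factorial_succ]; push_cast; ring
  have h1 : ((k:ℚ)+2) ≠ 0 := by positivity
  rw [hz]
  unfold tt Rq
  rw [c1, c2, c3, f1, f2]
  push_cast
  field_simp
  ring

lemma lemC (k : ℕ) :
    tt (k+2) (k+2) - 2*((k:ℚ)+2)*tt (k+1) (k+2) + ((k:ℚ)+1)^2 * tt k (k+2)
      = Rq (k+2) (k+3) * tt (k+2) (k+3) - Rq (k+2) (k+2) * tt (k+2) (k+2) := by
  have hz1 : tt (k+1) (k+2) = 0 := tt_zero (by omega)
  have hz2 : tt k (k+2) = 0 := tt_zero (by omega)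
  have hz3 : tt (k+2) (k+3) = 0 := tt_zero (by omega)
  rw [hz1, hz2, hz3]
  have h1 : ((k:ℚ)+2) ≠ 0 := by positivity
  unfold tt Rq
  rw [Nat.choose_self]
  push_cast
  field_simp
  ring

lemma H_zero : H 0 = 0 := by simp [H]


lemma ratio1 (k j : ℕ) :
    tt (k+j+1) k = ((j:ℚ)+2)^2/((k:ℚ)+j+2)^2 * tt (k+j+2) k := by
  have s1 : k+j+2-k = j+2 := by omega
  have s2 : k+j+1-k = j+1 := by omega
  have e1 : ((k+j+2).choose k : ℚ) = (k+j+2) ! / (k ! * (j+2) !) := by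
    rw [Nat.cast_choose ℚ (by omega), s1]
  have e2 : ((k+j+1).choose k : ℚ) = (k+j+1) ! / (k ! * (j+1) !) := by
    rw [Nat.cast_choose ℚ (by omega), s2]
  have f1 : ((k+j+2) ! : ℚ) = ((k:ℚ)+j+2)*((k+j+1) ! : ℚ) := by
    rw [Nat.factorial_succ]; push_cast; ring
  have f3 : ((j+2) ! : ℚ) = ((j:ℚ)+2)*((j+1) ! : ℚ) := by
    rw [Nat.factorial_succ]; push_cast; ring
  have hk : (k ! : ℚ) ≠ 0 := Nat.cast_ne_zero.2 (Nat.factorial_ne_zero k)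
  have hj : ((j+1) ! : ℚ) ≠ 0 := Nat.cast_ne_zero.2 (Nat.factorial_ne_zero _)
  have hkj : ((k+j+1) ! : ℚ) ≠ 0 := Nat.cast_ne_zero.2 (Nat.factorial_ne_zero _)
  have h1 : ((k:ℚ)+j+2) ≠ 0 := by positivity
  have h3 : ((j:ℚ)+2) ≠ 0 := by positivity
  unfold tt
  rw [e1, e2, f1, f3]
  field_simp

lemma ratio2 (k j : ℕ) :
    tt (k+j) k = (((j:ℚ)+2)*((j:ℚ)+1))^2/(((k:ℚ)+j+2)*((k:ℚ)+j+1))^2 * tt (k+j+2) k := by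
  have s1 : k+j+2-k = j+2 := by omega
  have s3 : k+j-k = j := by omega
  have e1 : ((k+j+2).choose k : ℚ) = (k+j+2) ! / (k ! * (j+2) !) := by
    rw [Nat.cast_choose ℚ (by omega), s1]
  have e3 : ((k+j).choose k : ℚ) = (k+j) ! / (k ! * j !) := by
    rw [Nat.cast_choose ℚ (by omega), s3]
  have f1 : ((k+j+2) ! : ℚ) = ((k:ℚ)+j+2)*((k:ℚ)+j+1)*((k+j) ! : ℚ) := by
    show (((k+j+1)+1) ! : ℚ) = _
    rw [Nat.factorial_succ, Nat.factorial_succ]; push_cast; ring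
  have f3 : ((j+2) ! : ℚ) = ((j:ℚ)+2)*((j:ℚ)+1)*(j ! : ℚ) := by
    rw [Nat.factorial_succ, Nat.factorial_succ]; push_cast; ring
  have hk : (k ! : ℚ) ≠ 0 := Nat.cast_ne_zero.2 (Nat.factorial_ne_zero k)
  have hj : (j ! : ℚ) ≠ 0 := Nat.cast_ne_zero.2 (Nat.factorial_ne_zero _)
  have hkj : ((k+j) ! : ℚ) ≠ 0 := Nat.cast_ne_zero.2 (Nat.factorial_ne_zero _)
  have h1 : ((k:ℚ)+j+2) ≠ 0 := by positivity
  have h2 : ((k:ℚ)+j+1) ≠ 0 := by positivity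
  have h3 : ((j:ℚ)+2) ≠ 0 := by positivity
  have h4 : ((j:ℚ)+1) ≠ 0 := by positivity
  unfold tt
  rw [e1, e3, f1, f3]
  field_simp

lemma ratio3 (k j : ℕ) :
    tt (k+j+2) (k+1) = ((j:ℚ)+2)^2/((k:ℚ)+1) * tt (k+j+2) k := by
  have s1 : k+j+2-k = j+2 := by omega
  have s4 : k+j+2-(k+1) = j+1 := by omega
  have e1 : ((k+j+2).choose k : ℚ) = (k+j+2) ! / (k ! * (j+2) !) := by
    rw [Nat.cast_choose ℚ (by omega), s1]
  have e4 : ((k+j+2).choose (k+1) : ℚ) = (k+j+2) ! / ((k+1) ! * (j+1) !) := by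
    rw [Nat.cast_choose ℚ (by omega), s4]
  have f3 : ((j+2) ! : ℚ) = ((j:ℚ)+2)*((j+1) ! : ℚ) := by
    rw [Nat.factorial_succ]; push_cast; ring
  have f5 : ((k+1) ! : ℚ) = ((k:ℚ)+1)*(k ! : ℚ) := by
    rw [Nat.factorial_succ]; push_cast; ring
  have hk : (k ! : ℚ) ≠ 0 := Nat.cast_ne_zero.2 (Nat.factorial_ne_zero k)
  have hj : ((j+1) ! : ℚ) ≠ 0 := Nat.cast_ne_zero.2 (Nat.factorial_ne_zero _)
  have hkj : ((k+j+2) ! : ℚ) ≠ 0 := Nat.cast_ne_zero.2 (Nat.factorial_ne_zero _)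
  have h3 : ((j:ℚ)+2) ≠ 0 := by positivity
  have h5 : ((k:ℚ)+1) ≠ 0 := by positivity
  unfold tt
  rw [e1, e4, f3, f5]
  field_simp

set_option maxHeartbeats 8000000 in
lemma lemA' (k j : ℕ) :
    hs (k+j+2) k - 2*((k:ℚ)+j+2)*hs (k+j+1) k + ((k:ℚ)+j+1)^2 * hs (k+j) k
      = (Rq (k+j+2) (k+1) * hs (k+j+2) (k+1) + Sq (k+j+2) (k+1) * tt (k+j+2) (k+1))
        - (Rq (k+j+2) k * hs (k+j+2) k + Sq (k+j+2) k * tt (k+j+2) k) := by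
  have s1 : k+j+2-k = j+2 := by omega
  have s2 : k+j+1-k = j+1 := by omega
  have s3 : k+j-k = j := by omega
  have s4 : k+j+2-(k+1) = j+1 := by omega
  have g1 : H (j+2) = H j + 1/((j:ℚ)+1) + 1/((j:ℚ)+2) := by
    rw [H_succ, H_succ]; push_cast; ring
  have g2 : H (j+1) = H j + 1/((j:ℚ)+1) := H_succ j
  have g3 : H (k+1) = H k + 1/((k:ℚ)+1) := H_succ k
  have h1 : ((k:ℚ)+j+2) ≠ 0 := by positivity
  have h2 : ((k:ℚ)+j+1) ≠ 0 := by positivity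
  have h3 : ((j:ℚ)+2) ≠ 0 := by positivity
  have h4 : ((j:ℚ)+1) ≠ 0 := by positivity
  have h5 : ((k:ℚ)+1) ≠ 0 := by positivity
  unfold hs Rq Sq
  rw [s1, s2, s3, s4, ratio1, ratio2, ratio3, g1, g2, g3]
  push_cast
  generalize H j = Y
  generalize H k = X
  generalize tt (k+j+2) k = T
  field_simp
  ring

lemma lemB' (k : ℕ) :
    hs (k+2) (k+1) - 2*((k:ℚ)+2)*hs (k+1) (k+1) + ((k:ℚ)+1)^2 * hs k (k+1)
      = (Rq (k+2) (k+2) * hs (k+2) (k+2) + Sq (k+2) (k+2) * tt (k+2) (k+2))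
        - (Rq (k+2) (k+1) * hs (k+2) (k+1) + Sq (k+2) (k+1) * tt (k+2) (k+1)) := by
  have hz : hs k (k+1) = 0 := hs_zero (by omega)
  have c1 : (k+2).choose (k+1) = k+2 := Nat.choose_succ_self_right (k+1)
  have c2 : (k+1).choose (k+1) = 1 := Nat.choose_self _
  have c3 : (k+2).choose (k+2) = 1 := Nat.choose_self _
  have s1 : (k+2)-(k+1) = 1 := by omega
  have s2 : (k+1)-(k+1) = 0 := by omega
  have s3 : (k+2)-(k+2) = 0 := by omega
  have f1 : ((k+2) ! : ℚ) = ((k:ℚ)+2)*((k:ℚ)+1)*(k ! : ℚ) := by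
    rw [Nat.factorial_succ, Nat.factorial_succ]; push_cast; ring
  have f2 : ((k+1) ! : ℚ) = ((k:ℚ)+1)*(k ! : ℚ) := by
    rw [Nat.factorial_succ]; push_cast; ring
  have g1 : H 1 = 1 := by simp [H]
  have g2 : H (k+1) = H k + 1/((k:ℚ)+1) := H_succ k
  have g3 : H (k+2) = H k + 1/((k:ℚ)+1) + 1/((k:ℚ)+2) := by
    rw [H_succ, H_succ]; push_cast; ring
  have h1 : ((k:ℚ)+2) ≠ 0 := by positivity
  have h5 : ((k:ℚ)+1) ≠ 0 := by positivity
  rw [hz]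
  unfold hs tt Rq Sq
  rw [s1, s2, s3, c1, c2, c3, f1, f2, g1, g2, g3, H_zero]
  push_cast
  generalize H k = X
  field_simp
  ring

lemma lemC' (k : ℕ) :
    hs (k+2) (k+2) - 2*((k:ℚ)+2)*hs (k+1) (k+2) + ((k:ℚ)+1)^2 * hs k (k+2)
      = (Rq (k+2) (k+3) * hs (k+2) (k+3) + Sq (k+2) (k+3) * tt (k+2) (k+3))
        - (Rq (k+2) (k+2) * hs (k+2) (k+2) + Sq (k+2) (k+2) * tt (k+2) (k+2)) := by
  have hz1 : hs (k+1) (k+2) = 0 := hs_zero (by omega)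
  have hz2 : hs k (k+2) = 0 := hs_zero (by omega)
  have hz3 : hs (k+2) (k+3) = 0 := hs_zero (by omega)
  have hz4 : tt (k+2) (k+3) = 0 := tt_zero (by omega)
  rw [hz1, hz2, hz3, hz4]
  have s3 : (k+2)-(k+2) = 0 := by omega
  have h1 : ((k:ℚ)+2) ≠ 0 := by positivity
  unfold hs tt Rq Sq
  rw [s3, Nat.choose_self, H_zero]
  push_cast
  generalize H (k+2) = X
  field_simp
  ring

/-- `dd n = p_{n-1} q_n - p_n q_{n-1}`, with the conventions `p_{-1} = 1`, `q_{-1} = 0`,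
so `dd 0 = 1`. -/
noncomputable def dd : ℕ → ℚ
  | 0 => 1
  | (n + 1) => p n * q (n + 1) - p (n + 1) * q n

lemma q_eq (n : ℕ) : q n = ∑ k ∈ Finset.range (n+1), tt n k := rfl

lemma p_eq (n : ℕ) : p n = ∑ k ∈ Finset.range (n+1), hs n k := rfl

lemma termA (m k : ℕ) (hk : k < m + 3) :
    tt (m+2) k - 2*((m:ℚ)+2)*tt (m+1) k + ((m:ℚ)+1)^2 * tt m k
      = Rq (m+2) (k+1) * tt (m+2) (k+1) - Rq (m+2) k * tt (m+2) k := by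
  rcases Nat.lt_or_ge k (m+1) with h | h
  · obtain ⟨j, rfl⟩ : ∃ j, m = k + j := ⟨m - k, by omega⟩
    have := lemA k j
    push_cast at this ⊢
    linear_combination this
  · rcases Nat.eq_or_lt_of_le h with h' | h'
    · have hk1 : k = m + 1 := by omega
      subst hk1
      have e : m+1+1 = m+2 := by omega
      rw [e]
      have := lemB m
      push_cast at this ⊢
      linear_combination this
    · have hk2 : k = m + 2 := by omega
      subst hk2
      have e : m+2+1 = m+3 := by omega
      rw [e]
      have := lemC m
      push_cast at this ⊢
      linear_combination this

lemma termA' (m k : ℕ) (hk : k < m + 3) :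
    hs (m+2) k - 2*((m:ℚ)+2)*hs (m+1) k + ((m:ℚ)+1)^2 * hs m k
      = (Rq (m+2) (k+1) * hs (m+2) (k+1) + Sq (m+2) (k+1) * tt (m+2) (k+1))
        - (Rq (m+2) k * hs (m+2) k + Sq (m+2) k * tt (m+2) k) := by
  rcases Nat.lt_or_ge k (m+1) with h | h
  · obtain ⟨j, rfl⟩ : ∃ j, m = k + j := ⟨m - k, by omega⟩
    have := lemA' k j
    push_cast at this ⊢
    linear_combination this
  · rcases Nat.eq_or_lt_of_le h with h' | h'
    · have hk1 : k = m + 1 := by omega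
      subst hk1
      have e : m+1+1 = m+2 := by omega
      rw [e]
      have := lemB' m
      push_cast at this ⊢
      linear_combination this
    · have hk2 : k = m + 2 := by omega
      subst hk2
      have e : m+2+1 = m+3 := by omega
      rw [e]
      have := lemC' m
      push_cast at this ⊢
      linear_combination this

lemma Rq_zero (n : ℕ) : Rq n 0 = 0 := by simp [Rq]

lemma q_rec (m : ℕ) :
    q (m+2) = 2*((m:ℚ)+2)*q (m+1) - ((m:ℚ)+1)^2 * q m := by
  have key : ∑ k ∈ Finset.range (m+3),
      (tt (m+2) k - 2*((m:ℚ)+2)*tt (m+1) k + ((m:ℚ)+1)^2 * tt m k)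
      = ∑ k ∈ Finset.range (m+3),
        (Rq (m+2) (k+1) * tt (m+2) (k+1) - Rq (m+2) k * tt (m+2) k) :=
    Finset.sum_congr rfl (fun k hk => termA m k (Finset.mem_range.mp hk))
  rw [Finset.sum_range_sub (fun k => Rq (m+2) k * tt (m+2) k) (m+3)] at key
  rw [tt_zero (show m+2 < m+3 by omega), Rq_zero] at key
  simp only [mul_zero, zero_mul, sub_zero, sub_self] at key
  have e1 : ∑ k ∈ Finset.range (m+3), tt (m+1) k = q (m+1) := by
    rw [Finset.sum_range_succ, tt_zero (show m+1 < m+2 by omega), add_zero, q_eq]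
  have e2 : ∑ k ∈ Finset.range (m+3), tt m k = q m := by
    rw [Finset.sum_range_succ, Finset.sum_range_succ,
      tt_zero (show m < m+2 by omega), tt_zero (show m < m+1 by omega), q_eq]
    ring
  have e0 : ∑ k ∈ Finset.range (m+3), tt (m+2) k = q (m+2) := (q_eq (m+2)).symm
  rw [Finset.sum_add_distrib, Finset.sum_sub_distrib, ← Finset.mul_sum, ← Finset.mul_sum,
    e0, e1, e2] at key
  linarith [key]

lemma Sq_zero (n : ℕ) (hn : 0 < n) : Sq n 0 = ((n:ℚ)-2)/(n:ℚ) := by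
  have h : (n:ℚ) ≠ 0 := Nat.cast_ne_zero.2 (by omega)
  unfold Sq
  field_simp
  ring

lemma tt_n0 (n : ℕ) : tt n 0 = 1 := by simp [tt]

lemma p_rec (m : ℕ) :
    p (m+2) = 2*((m:ℚ)+2)*p (m+1) - ((m:ℚ)+1)^2 * p m - (m:ℚ)/((m:ℚ)+2) := by
  have key : ∑ k ∈ Finset.range (m+3),
      (hs (m+2) k - 2*((m:ℚ)+2)*hs (m+1) k + ((m:ℚ)+1)^2 * hs m k)
      = ∑ k ∈ Finset.range (m+3),
        ((Rq (m+2) (k+1) * hs (m+2) (k+1) + Sq (m+2) (k+1) * tt (m+2) (k+1))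
          - (Rq (m+2) k * hs (m+2) k + Sq (m+2) k * tt (m+2) k)) :=
    Finset.sum_congr rfl (fun k hk => termA' m k (Finset.mem_range.mp hk))
  rw [Finset.sum_range_sub
    (fun k => Rq (m+2) k * hs (m+2) k + Sq (m+2) k * tt (m+2) k) (m+3)] at key
  rw [tt_zero (show m+2 < m+3 by omega), hs_zero (show m+2 < m+3 by omega),
    Rq_zero, tt_n0, Sq_zero (m+2) (by omega)] at key
  simp only [mul_zero, zero_mul, add_zero, zero_add, mul_one, sub_zero, zero_sub] at key
  have e1 : ∑ k ∈ Finset.range (m+3), hs (m+1) k = p (m+1) := by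
    rw [Finset.sum_range_succ, hs_zero (show m+1 < m+2 by omega), add_zero, p_eq]
  have e2 : ∑ k ∈ Finset.range (m+3), hs m k = p m := by
    rw [Finset.sum_range_succ, Finset.sum_range_succ,
      hs_zero (show m < m+2 by omega), hs_zero (show m < m+1 by omega), p_eq]
    ring
  have e0 : ∑ k ∈ Finset.range (m+3), hs (m+2) k = p (m+2) := (p_eq (m+2)).symm
  rw [Finset.sum_add_distrib, Finset.sum_sub_distrib, ← Finset.mul_sum, ← Finset.mul_sum,
    e0, e1, e2] at key
  push_cast at key
  have hcast : ((m:ℚ)+2-2)/((m:ℚ)+2) = (m:ℚ)/((m:ℚ)+2) := by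
    norm_num
  rw [hcast] at key
  linarith [key]

lemma dd_rec (m : ℕ) :
    dd (m+2) = ((m:ℚ)+1)^2 * dd (m+1) + (m:ℚ)/((m:ℚ)+2) * q (m+1) := by
  show p (m+1) * q (m+2) - p (m+2) * q (m+1)
    = ((m:ℚ)+1)^2 * (p m * q (m+1) - p (m+1) * q m) + (m:ℚ)/((m:ℚ)+2) * q (m+1)
  rw [q_rec m, p_rec m]
  ring

lemma q_int (n : ℕ) : ∃ Q : ℕ, q n = (Q : ℚ) := by
  refine ⟨∑ k ∈ Finset.range (n+1), (n.choose k)^2 * k.factorial, ?_⟩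
  rw [q]
  push_cast
  rfl

lemma dd_one : dd 1 = -1 := by
  show p 0 * q 1 - p 1 * q 0 = -1
  have hq0 : q 0 = 1 := by simp [q]
  have hq1 : q 1 = 2 := by
    rw [q]
    simp [Finset.sum_range_succ]
    norm_num
  have hp0 : p 0 = 0 := by simp [p, H]
  have hp1 : p 1 = 1 := by
    rw [p]
    simp [Finset.sum_range_succ, H]
    norm_num
  rw [hq0, hq1, hp0, hp1]
  ring

lemma key_ind (n : ℕ) : ∃ z : ℤ, ((n:ℚ)+1) * dd (n+1) = (z : ℚ)
    ∧ (n % 2 = 1 → ∃ w : ℤ, z = 2*w) := by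
  induction n with
  | zero =>
      exact ⟨-1, by rw [dd_one]; norm_num, fun h => absurd h (by omega)⟩
  | succ n ih =>
      obtain ⟨z, hz, _⟩ := ih
      obtain ⟨Q, hQ⟩ := q_int (n+1)
      refine ⟨(n+2)*(n+1)*z + n*Q, ?_, ?_⟩
      · have hrec := dd_rec n
        have hne : ((n:ℚ)+2) ≠ 0 := by positivity
        push_cast
        rw [hrec]
        have : ((n:ℚ)+1+1) * (((n:ℚ)+1)^2 * dd (n+1) + (n:ℚ)/((n:ℚ)+2) * q (n+1))
            = ((n:ℚ)+2)*((n:ℚ)+1) * (((n:ℚ)+1) * dd (n+1)) + (n:ℚ) * q (n+1) := by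
          field_simp
          ring
        rw [this, hz, hQ]
      · intro hpar
        obtain ⟨m, rfl⟩ : ∃ m, n = 2*m := ⟨n/2, by omega⟩
        exact ⟨(m+1)*(2*m+1)*z + m*Q, by push_cast; ring⟩

theorem n_dd_integer (n : ℕ) (hn : 1 ≤ n) :
    (∃ z : ℤ, (n : ℚ) * dd n = (z : ℚ)) ∧
      (Even n → ∃ z : ℤ, (n : ℚ) * dd n / 2 = (z : ℚ)) := by
  obtain ⟨m, rfl⟩ : ∃ m, n = m + 1 := ⟨n - 1, by omega⟩
  obtain ⟨z, hz, hpar⟩ := key_ind m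
  constructor
  · exact ⟨z, by push_cast at hz ⊢; exact hz⟩
  · intro he
    have hm : m % 2 = 1 := by
      rcases Nat.even_iff.mp he with h
      omega
    obtain ⟨w, rfl⟩ := hpar hm
    refine ⟨w, ?_⟩
    push_cast at hz ⊢
    rw [hz]
    ring
end
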